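/- arXiv:2310.14375 — 2 statements merged into one kernel-verified Lean document; each statement's English description precedes it below -/
import Mathlib

section
/- Let M, a be reals with 0 ≤ a < M and let u₀ be a real constant. On U, the 2-form F₃ = −(u₀/sinθ) dθ ∧ (−dt + a sin²θ dφ) and the 2-form F₄ = (u₀/Δ) dr ∧ (a dt − (r²+a²) dφ) are each closed and have identically vanishing current density (j^μ = 0 for all μ); i.e., F₃ and F₄ are vacuum solutions of Maxwell's equations in the exterior Kerr geometry. -/
noncomputable section

/-- Partial derivative of `f` in the coordinate direction `μ`,
coordinates `(x 0, x 1, x 2, x 3) = (t, r, θ, φ)`. -/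
def pd (μ : Fin 4) (f : (Fin 4 → ℝ) → ℝ) (x : Fin 4 → ℝ) : ℝ :=
  fderiv ℝ f x (Pi.single μ 1)

/-- ρ² = r² + a² cos²θ. -/
def rho2 (a : ℝ) (x : Fin 4 → ℝ) : ℝ := (x 1) ^ 2 + a ^ 2 * Real.cos (x 2) ^ 2

/-- Δ = r² − 2Mr + a². -/
def Del (M a : ℝ) (x : Fin 4 → ℝ) : ℝ := (x 1) ^ 2 - 2 * M * (x 1) + a ^ 2

/-- Σ² = (r²+a²)² − Δ a² sin²θ. -/
def Sig2 (M a : ℝ) (x : Fin 4 → ℝ) : ℝ :=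
  ((x 1) ^ 2 + a ^ 2) ^ 2 - Del M a x * a ^ 2 * Real.sin (x 2) ^ 2

/-- The Kerr metric in Boyer–Lindquist coordinates `(t, r, θ, φ)`. -/
def kerr (M a : ℝ) (x : Fin 4 → ℝ) : Matrix (Fin 4) (Fin 4) ℝ :=
  Matrix.of fun μ ν =>
    if μ = 0 ∧ ν = 0 then -1 + 2 * M * (x 1) / rho2 a x
    else if (μ = 0 ∧ ν = 3) ∨ (μ = 3 ∧ ν = 0) then
      -(2 * M * (x 1) * a * Real.sin (x 2) ^ 2) / rho2 a x
    else if μ = 1 ∧ ν = 1 then rho2 a x / Del M a x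
    else if μ = 2 ∧ ν = 2 then rho2 a x
    else if μ = 3 ∧ ν = 3 then Sig2 M a x * Real.sin (x 2) ^ 2 / rho2 a x
    else 0

/-- The exterior Kerr domain U = {r > r₊, 0 < θ < π}. -/
def KerrExt (M a : ℝ) : Set (Fin 4 → ℝ) :=
  {x | M + Real.sqrt (M ^ 2 - a ^ 2) < x 1 ∧ 0 < x 2 ∧ x 2 < Real.pi}

/-- `wedge μ ν f` is the antisymmetric matrix of the 2-form `f dx^μ ∧ dx^ν`. -/
def wedge (μ ν : Fin 4) (f : ℝ) : Matrix (Fin 4) (Fin 4) ℝ :=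
  Matrix.of fun i j => if i = μ ∧ j = ν then f else if i = ν ∧ j = μ then -f else 0

/-- A 2-form `F` is closed on `S`: ∂_μ F_{νλ} + ∂_ν F_{λμ} + ∂_λ F_{μν} = 0. -/
def Closed2Form (F : (Fin 4 → ℝ) → Matrix (Fin 4) (Fin 4) ℝ) (S : Set (Fin 4 → ℝ)) : Prop :=
  ∀ x ∈ S, ∀ μ ν lam : Fin 4,
    pd μ (fun y => F y ν lam) x + pd ν (fun y => F y lam μ) x
      + pd lam (fun y => F y μ ν) x = 0

/-- Current density j^μ = (ρ²sinθ)⁻¹ ∂_ν (ρ²sinθ g^{μα} g^{νβ} F_{αβ}). -/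
def current (M a : ℝ) (F : (Fin 4 → ℝ) → Matrix (Fin 4) (Fin 4) ℝ)
    (x : Fin 4 → ℝ) (μ : Fin 4) : ℝ :=
  (rho2 a x * Real.sin (x 2))⁻¹ *
    ∑ ν : Fin 4, pd ν (fun y => rho2 a y * Real.sin (y 2) *
      ∑ i : Fin 4, ∑ j : Fin 4, (kerr M a y)⁻¹ μ i * (kerr M a y)⁻¹ ν j * F y i j) x

/-- `F` is force-free on `S`: F_{μν} j^ν = 0 for the current density `j` of `F`. -/
def ForceFree (M a : ℝ) (F : (Fin 4 → ℝ) → Matrix (Fin 4) (Fin 4) ℝ)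
    (S : Set (Fin 4 → ℝ)) : Prop :=
  ∀ x ∈ S, ∀ μ : Fin 4, ∑ ν : Fin 4, F x μ ν * current M a F x ν = 0

/-- F₃ = −(u₀/sinθ) dθ ∧ (−dt + a sin²θ dφ). -/
def F3 (a u₀ : ℝ) (x : Fin 4 → ℝ) : Matrix (Fin 4) (Fin 4) ℝ :=
  wedge 2 0 (-(u₀ / Real.sin (x 2)) * (-1))
    + wedge 2 3 (-(u₀ / Real.sin (x 2)) * (a * Real.sin (x 2) ^ 2))

/-- F₄ = (u₀/Δ) dr ∧ (a dt − (r²+a²) dφ). -/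
def F4 (M a u₀ : ℝ) (x : Fin 4 → ℝ) : Matrix (Fin 4) (Fin 4) ℝ :=
  wedge 1 0 ((u₀ / Del M a x) * a)
    + wedge 1 3 ((u₀ / Del M a x) * (-((x 1) ^ 2 + a ^ 2)))



lemma pd_const (μ : Fin 4) (c : ℝ) (x : Fin 4 → ℝ) : pd μ (fun _ => c) x = 0 := by
  simp [pd]

lemma pd_neg (μ : Fin 4) (f : (Fin 4 → ℝ) → ℝ) (x : Fin 4 → ℝ) :
    pd μ (fun y => -(f y)) x = -pd μ f x := by
  simp [pd, fderiv_neg]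

lemma pd_proj (g : ℝ → ℝ) (i μ : Fin 4) (x : Fin 4 → ℝ)
    (hg : DifferentiableAt ℝ g (x i)) (h : i ≠ μ) :
    pd μ (fun y => g (y i)) x = 0 := by
  have hproj : (fun y : Fin 4 → ℝ => y i)
      = ⇑(ContinuousLinearMap.proj (R := ℝ) (φ := fun _ : Fin 4 => ℝ) i) := rfl
  have hc : (fun y : Fin 4 → ℝ => g (y i)) = g ∘ (fun y : Fin 4 → ℝ => y i) := rfl
  have hd : DifferentiableAt ℝ (fun y : Fin 4 → ℝ => y i) x := by
    rw [hproj]; exact (ContinuousLinearMap.proj (R := ℝ) (φ := fun _ : Fin 4 => ℝ) i).differentiableAt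
  rw [pd, hc, fderiv_comp x hg hd, hproj, ContinuousLinearMap.fderiv]
  simp [Pi.single_eq_of_ne h]

lemma pd_congr {f g : (Fin 4 → ℝ) → ℝ} {x : Fin 4 → ℝ} (h : f =ᶠ[nhds x] g) (μ : Fin 4) :
    pd μ f x = pd μ g x := by
  unfold pd; rw [h.fderiv_eq]

lemma closed_single (x : Fin 4 → ℝ) (k : Fin 4) (G : Fin 4 → Fin 4 → ℝ → ℝ)
    (hanti : ∀ i j t, G i j t = -(G j i t))
    (hzero : ∀ i j, i ≠ k → j ≠ k → ∀ t, G i j t = 0)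
    (hdiff : ∀ i j, DifferentiableAt ℝ (G i j) (x k)) (μ ν lam : Fin 4) :
    pd μ (fun y => G ν lam (y k)) x + pd ν (fun y => G lam μ (y k)) x
      + pd lam (fun y => G μ ν (y k)) x = 0 := by
  have hkk : ∀ p : Fin 4, pd p (fun y => G k k (y k)) x = 0 := by
    intro p
    have h0 : (fun y : Fin 4 → ℝ => G k k (y k)) = fun _ => (0:ℝ) := by
      funext y; have := hanti k k (y k); linarith
    rw [h0, pd_const]
  have hne : ∀ p q r : Fin 4, p ≠ k → pd p (fun y => G q r (y k)) x = 0 := by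
    intro p q r hp; exact pd_proj (G q r) k p x (hdiff q r) (Ne.symm hp)
  have hz : ∀ p q r : Fin 4, q ≠ k → r ≠ k → pd p (fun y => G q r (y k)) x = 0 := by
    intro p q r hq hr
    have h0 : (fun y : Fin 4 → ℝ => G q r (y k)) = fun _ => (0:ℝ) := by
      funext y; exact hzero q r hq hr (y k)
    rw [h0, pd_const]
  have hcancel : ∀ q : Fin 4, pd k (fun y => G k q (y k)) x + pd k (fun y => G q k (y k)) x = 0 := by
    intro q
    have h1 : (fun y : Fin 4 → ℝ => G q k (y k)) = fun y => -(G k q (y k)) := by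
      funext y; exact hanti q k (y k)
    rw [h1, pd_neg]; ring
  by_cases hμ : μ = k <;> by_cases hν : ν = k <;> by_cases hlam : lam = k
  · rw [hμ, hν, hlam]; simp [hkk]
  · rw [hμ, hν]; linarith [hcancel lam, hkk lam]
  · rw [hμ, hlam]; linarith [hcancel ν, hkk ν]
  · rw [hμ, hz k ν lam hν hlam, hne ν lam k hν, hne lam k ν hlam]; ring
  · rw [hν, hlam]; linarith [hcancel μ, hkk μ]
  · rw [hν, hne μ k lam hμ, hz k lam μ hlam hμ, hne lam μ k hlam]; ring
  · rw [hlam, hne μ ν k hμ, hne ν k μ hν, hz k μ ν hμ hν]; ring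
  · rw [hne μ ν lam hμ, hne ν lam μ hν, hne lam μ ν hlam]; ring

lemma kerrExt_facts {M a : ℝ} (ha : 0 ≤ a) (haM : a < M) {x : Fin 4 → ℝ}
    (hx : x ∈ KerrExt M a) :
    0 < Del M a x ∧ 0 < rho2 a x ∧ 0 < Real.sin (x 2) := by
  obtain ⟨h1, h2, h3⟩ := hx
  have hM2 : a ^ 2 ≤ M ^ 2 := by nlinarith
  have hs : Real.sqrt (M ^ 2 - a ^ 2) ^ 2 = M ^ 2 - a ^ 2 :=
    Real.sq_sqrt (by linarith)
  have hsn : 0 ≤ Real.sqrt (M ^ 2 - a ^ 2) := Real.sqrt_nonneg _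
  have hr : M < x 1 := by linarith
  have hx1 : 0 < x 1 := by linarith
  refine ⟨by unfold Del; nlinarith, by unfold rho2; positivity, Real.sin_pos_of_pos_of_lt_pi h2 h3⟩

lemma isOpen_kerrExt (M a : ℝ) : IsOpen (KerrExt M a) := by
  have : KerrExt M a = (fun x : Fin 4 → ℝ => x 1) ⁻¹' Set.Ioi (M + Real.sqrt (M ^ 2 - a ^ 2))
      ∩ (fun x : Fin 4 → ℝ => x 2) ⁻¹' Set.Ioo 0 Real.pi := by
    ext x; simp [KerrExt, Set.mem_Ioi, Set.mem_Ioo, and_assoc]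
  rw [this]
  exact (isOpen_Ioi.preimage (continuous_apply 1)).inter (isOpen_Ioo.preimage (continuous_apply 2))

def ginv (M a : ℝ) (x : Fin 4 → ℝ) : Matrix (Fin 4) (Fin 4) ℝ :=
  Matrix.of fun μ ν =>
    if μ = 0 ∧ ν = 0 then -(Sig2 M a x) / (rho2 a x * Del M a x)
    else if (μ = 0 ∧ ν = 3) ∨ (μ = 3 ∧ ν = 0) then
      -(2 * M * (x 1) * a) / (rho2 a x * Del M a x)
    else if μ = 1 ∧ ν = 1 then Del M a x / rho2 a x
    else if μ = 2 ∧ ν = 2 then (rho2 a x)⁻¹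
    else if μ = 3 ∧ ν = 3 then
      (rho2 a x - 2 * M * (x 1)) / (rho2 a x * Del M a x * Real.sin (x 2) ^ 2)
    else 0

lemma kerr_inv {M a : ℝ} (ha : 0 ≤ a) (haM : a < M) {x : Fin 4 → ℝ}
    (hx : x ∈ KerrExt M a) : (kerr M a x)⁻¹ = ginv M a x := by
  obtain ⟨hΔ, hρ, hsin⟩ := kerrExt_facts ha haM hx
  have hΔ' : Del M a x ≠ 0 := ne_of_gt hΔ
  have hρ' : rho2 a x ≠ 0 := ne_of_gt hρ
  have hs' : Real.sin (x 2) ≠ 0 := ne_of_gt hsin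
  refine Matrix.inv_eq_right_inv ?_
  ext i j
  have hcos : Real.cos (x 2) ^ 2 = 1 - Real.sin (x 2) ^ 2 := Real.cos_sq' _
  have hρ2 : (x 1) ^ 2 + a ^ 2 * (1 - Real.sin (x 2) ^ 2) ≠ 0 := by
    rw [← hcos]; exact hρ'
  have hΔ2 : (x 1) ^ 2 - 2 * M * (x 1) + a ^ 2 ≠ 0 := hΔ'
  have hΔ3 : x 1 * (x 1 - 2 * M) + a ^ 2 ≠ 0 := by intro h; apply hΔ2; linear_combination h
  fin_cases i <;> fin_cases j <;>
    simp [kerr, ginv, Matrix.mul_apply, Fin.sum_univ_four, Matrix.one_apply] <;>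
    (try simp only [rho2, Del, Sig2, hcos]) <;> field_simp <;> ring

lemma F3_closed (M a u₀ : ℝ) (ha : 0 ≤ a) (haM : a < M) :
    Closed2Form (F3 a u₀) (KerrExt M a) := by
  intro x hx μ ν lam
  obtain ⟨hΔ, hρ, hsin⟩ := kerrExt_facts ha haM hx
  have hs' : Real.sin (x 2) ≠ 0 := ne_of_gt hsin
  exact closed_single x 2 (fun i j t => F3 a u₀ (fun _ => t) i j)
    (by intro i j t; fin_cases i <;> fin_cases j <;>
          simp [F3, wedge, Matrix.add_apply, Matrix.of_apply] <;> ring)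
    (by intro i j hi hj t; fin_cases i <;> fin_cases j <;>
          simp_all [F3, wedge, Matrix.add_apply, Matrix.of_apply])
    (by intro i j; fin_cases i <;> fin_cases j <;>
          simp [F3, wedge, Matrix.add_apply, Matrix.of_apply] <;>
          fun_prop (disch := assumption))
    μ ν lam

lemma F4_closed (M a u₀ : ℝ) (ha : 0 ≤ a) (haM : a < M) :
    Closed2Form (F4 M a u₀) (KerrExt M a) := by
  intro x hx μ ν lam
  obtain ⟨hΔ, hρ, hsin⟩ := kerrExt_facts ha haM hx
  have hΔ' : (x 1) ^ 2 - 2 * M * (x 1) + a ^ 2 ≠ 0 := hΔ.ne'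
  exact closed_single x 1 (fun i j t => F4 M a u₀ (fun _ => t) i j)
    (by intro i j t; fin_cases i <;> fin_cases j <;>
          simp [F4, wedge, Matrix.add_apply, Matrix.of_apply] <;> ring)
    (by intro i j hi hj t; fin_cases i <;> fin_cases j <;>
          simp_all [F4, wedge, Matrix.add_apply, Matrix.of_apply])
    (by intro i j; fin_cases i <;> fin_cases j <;>
          simp [F4, wedge, Del, Matrix.add_apply, Matrix.of_apply] <;>
          fun_prop (disch := assumption))
    μ ν lam

lemma pd_flux_zero {M a : ℝ} (ha : 0 ≤ a) (haM : a < M)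
    (F : (Fin 4 → ℝ) → Matrix (Fin 4) (Fin 4) ℝ) (μ ν k : Fin 4) (g : ℝ → ℝ)
    {x : Fin 4 → ℝ} (hx : x ∈ KerrExt M a) (hk : k ≠ ν) (hg : DifferentiableAt ℝ g (x k))
    (key : ∀ y ∈ KerrExt M a, rho2 a y * Real.sin (y 2) *
      ∑ i : Fin 4, ∑ j : Fin 4, ginv M a y μ i * ginv M a y ν j * F y i j = g (y k)) :
    pd ν (fun y => rho2 a y * Real.sin (y 2) *
      ∑ i : Fin 4, ∑ j : Fin 4, (kerr M a y)⁻¹ μ i * (kerr M a y)⁻¹ ν j * F y i j) x = 0 := by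
  have hev : (fun y => rho2 a y * Real.sin (y 2) * ∑ i : Fin 4, ∑ j : Fin 4,
      (kerr M a y)⁻¹ μ i * (kerr M a y)⁻¹ ν j * F y i j) =ᶠ[nhds x] fun y => g (y k) := by
    filter_upwards [(isOpen_kerrExt M a).mem_nhds hx] with y hy
    rw [kerr_inv ha haM hy]; exact key y hy
  rw [pd_congr hev ν]
  exact pd_proj g k ν x hg hk

set_option maxHeartbeats 2000000 in
lemma F3_flux_zero (M a u₀ : ℝ) (ha : 0 ≤ a) (haM : a < M) {x : Fin 4 → ℝ}
    (hx : x ∈ KerrExt M a) (μ ν : Fin 4) :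
    pd ν (fun y => rho2 a y * Real.sin (y 2) *
      ∑ i : Fin 4, ∑ j : Fin 4, (kerr M a y)⁻¹ μ i * (kerr M a y)⁻¹ ν j * F3 a u₀ y i j) x = 0 := by
  obtain ⟨hΔx, hρx, hsx⟩ := kerrExt_facts ha haM hx
  have hΔx' : (x 1) ^ 2 - 2 * M * (x 1) + a ^ 2 ≠ 0 := hΔx.ne'
  have hsx' : Real.sin (x 2) ≠ 0 := hsx.ne'
  fin_cases μ <;> fin_cases ν
  · refine pd_flux_zero ha haM _ 0 0 1 (fun _ => 0) hx (by decide) (by fun_prop) ?_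
    intro y hy
    simp [ginv, F3, wedge, Matrix.add_apply, Fin.sum_univ_four]
  · refine pd_flux_zero ha haM _ 0 1 0 (fun _ => 0) hx (by decide) (by fun_prop) ?_
    intro y hy
    simp [ginv, F3, wedge, Matrix.add_apply, Fin.sum_univ_four]
  · refine pd_flux_zero ha haM _ 0 2 1 (fun t => u₀ * (t ^ 2 + a ^ 2) / (t ^ 2 - 2 * M * t + a ^ 2))
      hx (by decide) (by fun_prop (disch := assumption)) ?_
    intro y hy
    obtain ⟨hΔ, hρ, hs⟩ := kerrExt_facts ha haM hy
    have hΔ' : (y 1) ^ 2 - 2 * M * (y 1) + a ^ 2 ≠ 0 := hΔ.ne'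
    have hs' : Real.sin (y 2) ≠ 0 := hs.ne'
    have hcos : Real.cos (y 2) ^ 2 = 1 - Real.sin (y 2) ^ 2 := Real.cos_sq' _
    have hρ2 : (y 1) ^ 2 + a ^ 2 * (1 - Real.sin (y 2) ^ 2) ≠ 0 := by rw [← hcos]; exact hρ.ne'
    simp [ginv, F3, wedge, Matrix.add_apply, Fin.sum_univ_four]
    simp only [rho2, Del, Sig2, hcos]
    field_simp
    ring
  · refine pd_flux_zero ha haM _ 0 3 1 (fun _ => 0) hx (by decide) (by fun_prop) ?_
    intro y hy
    simp [ginv, F3, wedge, Matrix.add_apply, Fin.sum_univ_four]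
  · refine pd_flux_zero ha haM _ 1 0 1 (fun _ => 0) hx (by decide) (by fun_prop) ?_
    intro y hy
    simp [ginv, F3, wedge, Matrix.add_apply, Fin.sum_univ_four]
  · refine pd_flux_zero ha haM _ 1 1 0 (fun _ => 0) hx (by decide) (by fun_prop) ?_
    intro y hy
    simp [ginv, F3, wedge, Matrix.add_apply, Fin.sum_univ_four]
  · refine pd_flux_zero ha haM _ 1 2 1 (fun _ => 0) hx (by decide) (by fun_prop) ?_
    intro y hy
    simp [ginv, F3, wedge, Matrix.add_apply, Fin.sum_univ_four]
  · refine pd_flux_zero ha haM _ 1 3 1 (fun _ => 0) hx (by decide) (by fun_prop) ?_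
    intro y hy
    simp [ginv, F3, wedge, Matrix.add_apply, Fin.sum_univ_four]
  · refine pd_flux_zero ha haM _ 2 0 1 (fun t => -(u₀ * (t ^ 2 + a ^ 2) / (t ^ 2 - 2 * M * t + a ^ 2)))
      hx (by decide) (by fun_prop (disch := assumption)) ?_
    intro y hy
    obtain ⟨hΔ, hρ, hs⟩ := kerrExt_facts ha haM hy
    have hΔ' : (y 1) ^ 2 - 2 * M * (y 1) + a ^ 2 ≠ 0 := hΔ.ne'
    have hs' : Real.sin (y 2) ≠ 0 := hs.ne'
    have hcos : Real.cos (y 2) ^ 2 = 1 - Real.sin (y 2) ^ 2 := Real.cos_sq' _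
    have hρ2 : (y 1) ^ 2 + a ^ 2 * (1 - Real.sin (y 2) ^ 2) ≠ 0 := by rw [← hcos]; exact hρ.ne'
    simp [ginv, F3, wedge, Matrix.add_apply, Fin.sum_univ_four]
    simp only [rho2, Del, Sig2, hcos]
    field_simp
    ring
  · refine pd_flux_zero ha haM _ 2 1 0 (fun _ => 0) hx (by decide) (by fun_prop) ?_
    intro y hy
    simp [ginv, F3, wedge, Matrix.add_apply, Fin.sum_univ_four]
  · refine pd_flux_zero ha haM _ 2 2 1 (fun _ => 0) hx (by decide) (by fun_prop) ?_
    intro y hy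
    simp [ginv, F3, wedge, Matrix.add_apply, Fin.sum_univ_four]
  · refine pd_flux_zero ha haM _ 2 3 1 (fun t => -(u₀ * a / (t ^ 2 - 2 * M * t + a ^ 2)))
      hx (by decide) (by fun_prop (disch := assumption)) ?_
    intro y hy
    obtain ⟨hΔ, hρ, hs⟩ := kerrExt_facts ha haM hy
    have hΔ' : (y 1) ^ 2 - 2 * M * (y 1) + a ^ 2 ≠ 0 := hΔ.ne'
    have hs' : Real.sin (y 2) ≠ 0 := hs.ne'
    have hcos : Real.cos (y 2) ^ 2 = 1 - Real.sin (y 2) ^ 2 := Real.cos_sq' _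
    have hρ2 : (y 1) ^ 2 + a ^ 2 * (1 - Real.sin (y 2) ^ 2) ≠ 0 := by rw [← hcos]; exact hρ.ne'
    simp [ginv, F3, wedge, Matrix.add_apply, Fin.sum_univ_four]
    simp only [rho2, Del, Sig2, hcos]
    field_simp
    ring
  · refine pd_flux_zero ha haM _ 3 0 1 (fun _ => 0) hx (by decide) (by fun_prop) ?_
    intro y hy
    simp [ginv, F3, wedge, Matrix.add_apply, Fin.sum_univ_four]
  · refine pd_flux_zero ha haM _ 3 1 0 (fun _ => 0) hx (by decide) (by fun_prop) ?_
    intro y hy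
    simp [ginv, F3, wedge, Matrix.add_apply, Fin.sum_univ_four]
  · refine pd_flux_zero ha haM _ 3 2 1 (fun t => u₀ * a / (t ^ 2 - 2 * M * t + a ^ 2))
      hx (by decide) (by fun_prop (disch := assumption)) ?_
    intro y hy
    obtain ⟨hΔ, hρ, hs⟩ := kerrExt_facts ha haM hy
    have hΔ' : (y 1) ^ 2 - 2 * M * (y 1) + a ^ 2 ≠ 0 := hΔ.ne'
    have hs' : Real.sin (y 2) ≠ 0 := hs.ne'
    have hcos : Real.cos (y 2) ^ 2 = 1 - Real.sin (y 2) ^ 2 := Real.cos_sq' _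
    have hρ2 : (y 1) ^ 2 + a ^ 2 * (1 - Real.sin (y 2) ^ 2) ≠ 0 := by rw [← hcos]; exact hρ.ne'
    simp [ginv, F3, wedge, Matrix.add_apply, Fin.sum_univ_four]
    simp only [rho2, Del, Sig2, hcos]
    field_simp
    ring
  · refine pd_flux_zero ha haM _ 3 3 1 (fun _ => 0) hx (by decide) (by fun_prop) ?_
    intro y hy
    simp [ginv, F3, wedge, Matrix.add_apply, Fin.sum_univ_four]

set_option maxHeartbeats 2000000 in
lemma F4_flux_zero (M a u₀ : ℝ) (ha : 0 ≤ a) (haM : a < M) {x : Fin 4 → ℝ}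
    (hx : x ∈ KerrExt M a) (μ ν : Fin 4) :
    pd ν (fun y => rho2 a y * Real.sin (y 2) *
      ∑ i : Fin 4, ∑ j : Fin 4, (kerr M a y)⁻¹ μ i * (kerr M a y)⁻¹ ν j * F4 M a u₀ y i j) x = 0 := by
  obtain ⟨hΔx, hρx, hsx⟩ := kerrExt_facts ha haM hx
  have hΔx' : (x 1) ^ 2 - 2 * M * (x 1) + a ^ 2 ≠ 0 := hΔx.ne'
  have hsx' : Real.sin (x 2) ≠ 0 := hsx.ne'
  fin_cases μ <;> fin_cases ν
  · refine pd_flux_zero ha haM _ 0 0 1 (fun _ => 0) hx (by decide) (by fun_prop) ?_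
    intro y hy
    simp [ginv, F4, wedge, Matrix.add_apply, Fin.sum_univ_four]
  · refine pd_flux_zero ha haM _ 0 1 2 (fun t => u₀ * a * Real.sin t)
      hx (by decide) (by fun_prop (disch := assumption)) ?_
    intro y hy
    obtain ⟨hΔ, hρ, hs⟩ := kerrExt_facts ha haM hy
    have hΔ' : (y 1) ^ 2 - 2 * M * (y 1) + a ^ 2 ≠ 0 := hΔ.ne'
    have hs' : Real.sin (y 2) ≠ 0 := hs.ne'
    have hcos : Real.cos (y 2) ^ 2 = 1 - Real.sin (y 2) ^ 2 := Real.cos_sq' _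
    have hρ2 : (y 1) ^ 2 + a ^ 2 * (1 - Real.sin (y 2) ^ 2) ≠ 0 := by rw [← hcos]; exact hρ.ne'
    simp [ginv, F4, wedge, Matrix.add_apply, Fin.sum_univ_four]
    simp only [rho2, Del, Sig2, hcos]
    have hΔ'' : y 1 * (y 1 - 2 * M) + a ^ 2 ≠ 0 := by intro h; apply hΔ'; linear_combination h
    field_simp
    ring
  · refine pd_flux_zero ha haM _ 0 2 1 (fun _ => 0) hx (by decide) (by fun_prop) ?_
    intro y hy
    simp [ginv, F4, wedge, Matrix.add_apply, Fin.sum_univ_four]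
  · refine pd_flux_zero ha haM _ 0 3 1 (fun _ => 0) hx (by decide) (by fun_prop) ?_
    intro y hy
    simp [ginv, F4, wedge, Matrix.add_apply, Fin.sum_univ_four]
  · refine pd_flux_zero ha haM _ 1 0 2 (fun t => -(u₀ * a * Real.sin t))
      hx (by decide) (by fun_prop (disch := assumption)) ?_
    intro y hy
    obtain ⟨hΔ, hρ, hs⟩ := kerrExt_facts ha haM hy
    have hΔ' : (y 1) ^ 2 - 2 * M * (y 1) + a ^ 2 ≠ 0 := hΔ.ne'
    have hs' : Real.sin (y 2) ≠ 0 := hs.ne'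
    have hcos : Real.cos (y 2) ^ 2 = 1 - Real.sin (y 2) ^ 2 := Real.cos_sq' _
    have hρ2 : (y 1) ^ 2 + a ^ 2 * (1 - Real.sin (y 2) ^ 2) ≠ 0 := by rw [← hcos]; exact hρ.ne'
    simp [ginv, F4, wedge, Matrix.add_apply, Fin.sum_univ_four]
    simp only [rho2, Del, Sig2, hcos]
    have hΔ'' : y 1 * (y 1 - 2 * M) + a ^ 2 ≠ 0 := by intro h; apply hΔ'; linear_combination h
    field_simp
    ring
  · refine pd_flux_zero ha haM _ 1 1 0 (fun _ => 0) hx (by decide) (by fun_prop) ?_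
    intro y hy
    simp [ginv, F4, wedge, Matrix.add_apply, Fin.sum_univ_four]
  · refine pd_flux_zero ha haM _ 1 2 1 (fun _ => 0) hx (by decide) (by fun_prop) ?_
    intro y hy
    simp [ginv, F4, wedge, Matrix.add_apply, Fin.sum_univ_four]
  · refine pd_flux_zero ha haM _ 1 3 2 (fun t => -(u₀ / Real.sin t))
      hx (by decide) (by fun_prop (disch := assumption)) ?_
    intro y hy
    obtain ⟨hΔ, hρ, hs⟩ := kerrExt_facts ha haM hy
    have hΔ' : (y 1) ^ 2 - 2 * M * (y 1) + a ^ 2 ≠ 0 := hΔ.ne'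
    have hs' : Real.sin (y 2) ≠ 0 := hs.ne'
    have hcos : Real.cos (y 2) ^ 2 = 1 - Real.sin (y 2) ^ 2 := Real.cos_sq' _
    have hρ2 : (y 1) ^ 2 + a ^ 2 * (1 - Real.sin (y 2) ^ 2) ≠ 0 := by rw [← hcos]; exact hρ.ne'
    simp [ginv, F4, wedge, Matrix.add_apply, Fin.sum_univ_four]
    simp only [rho2, Del, Sig2, hcos]
    have hΔ'' : y 1 * (y 1 - 2 * M) + a ^ 2 ≠ 0 := by intro h; apply hΔ'; linear_combination h
    field_simp
    ring
  · refine pd_flux_zero ha haM _ 2 0 1 (fun _ => 0) hx (by decide) (by fun_prop) ?_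
    intro y hy
    simp [ginv, F4, wedge, Matrix.add_apply, Fin.sum_univ_four]
  · refine pd_flux_zero ha haM _ 2 1 0 (fun _ => 0) hx (by decide) (by fun_prop) ?_
    intro y hy
    simp [ginv, F4, wedge, Matrix.add_apply, Fin.sum_univ_four]
  · refine pd_flux_zero ha haM _ 2 2 1 (fun _ => 0) hx (by decide) (by fun_prop) ?_
    intro y hy
    simp [ginv, F4, wedge, Matrix.add_apply, Fin.sum_univ_four]
  · refine pd_flux_zero ha haM _ 2 3 1 (fun _ => 0) hx (by decide) (by fun_prop) ?_
    intro y hy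
    simp [ginv, F4, wedge, Matrix.add_apply, Fin.sum_univ_four]
  · refine pd_flux_zero ha haM _ 3 0 1 (fun _ => 0) hx (by decide) (by fun_prop) ?_
    intro y hy
    simp [ginv, F4, wedge, Matrix.add_apply, Fin.sum_univ_four]
  · refine pd_flux_zero ha haM _ 3 1 2 (fun t => u₀ / Real.sin t)
      hx (by decide) (by fun_prop (disch := assumption)) ?_
    intro y hy
    obtain ⟨hΔ, hρ, hs⟩ := kerrExt_facts ha haM hy
    have hΔ' : (y 1) ^ 2 - 2 * M * (y 1) + a ^ 2 ≠ 0 := hΔ.ne'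
    have hs' : Real.sin (y 2) ≠ 0 := hs.ne'
    have hcos : Real.cos (y 2) ^ 2 = 1 - Real.sin (y 2) ^ 2 := Real.cos_sq' _
    have hρ2 : (y 1) ^ 2 + a ^ 2 * (1 - Real.sin (y 2) ^ 2) ≠ 0 := by rw [← hcos]; exact hρ.ne'
    simp [ginv, F4, wedge, Matrix.add_apply, Fin.sum_univ_four]
    simp only [rho2, Del, Sig2, hcos]
    have hΔ'' : y 1 * (y 1 - 2 * M) + a ^ 2 ≠ 0 := by intro h; apply hΔ'; linear_combination h
    field_simp
    ring
  · refine pd_flux_zero ha haM _ 3 2 1 (fun _ => 0) hx (by decide) (by fun_prop) ?_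
    intro y hy
    simp [ginv, F4, wedge, Matrix.add_apply, Fin.sum_univ_four]
  · refine pd_flux_zero ha haM _ 3 3 1 (fun _ => 0) hx (by decide) (by fun_prop) ?_
    intro y hy
    simp [ginv, F4, wedge, Matrix.add_apply, Fin.sum_univ_four]

/-- F₃ and F₄ are closed with vanishing current density, i.e. they are
vacuum solutions of Maxwell's equations in exterior Kerr geometry. -/
theorem kerr_F3_F4_vacuum (M a u₀ : ℝ) (ha : 0 ≤ a) (haM : a < M) :
    (Closed2Form (F3 a u₀) (KerrExt M a) ∧
      ∀ x ∈ KerrExt M a, ∀ μ : Fin 4, current M a (F3 a u₀) x μ = 0) ∧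
    (Closed2Form (F4 M a u₀) (KerrExt M a) ∧
      ∀ x ∈ KerrExt M a, ∀ μ : Fin 4, current M a (F4 M a u₀) x μ = 0) := by
  refine ⟨⟨F3_closed M a u₀ ha haM, ?_⟩, F4_closed M a u₀ ha haM, ?_⟩
  · intro x hx μ
    have h := F3_flux_zero M a u₀ ha haM hx μ
    simp [current, h]
  · intro x hx μ
    have h := F4_flux_zero M a u₀ ha haM hx μ
    simp [current, h]
end
end

section
/- Let M, a be reals with 0 ≤ a < M, set r₊ = M + √(M²−a²) and r₋ = M − √(M²−a²), and Δ(r) = r² − 2Mr + a² = (r−r₊)(r−r₋). Let c₁, c₂ be real constants and fix r₀ > r₊. Define W(r) = exp( −2 ∫_{r₀}^{r} (c₁ s² − c₂)/Δ(s) ds ) for r ∈ (r₊, ∞), and set q = 2(c₂ − c₁ r₊²)/(r₊ − r₋). If q ≥ 1, then the function r ↦ W(r)/Δ(r) has a finite limit as r → r₊ from the right (so it extends continuously to the horizon r = r₊); moreover the limit is 0 when q > 1. -/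
/-- horizon regularity of the radial profile W(r)/Δ(r), with
W(r) = exp(−2 ∫_{r₀}^{r} (c₁s² − c₂)/Δ(s) ds) and q = 2(c₂ − c₁r₊²)/(r₊ − r₋):
if q ≥ 1 then W/Δ has a finite limit as r → r₊⁺, and the limit is 0 when q > 1. -/
theorem kerr_horizon_regularity (M a : ℝ) (ha : 0 ≤ a) (haM : a < M) (c₁ c₂ r₀ : ℝ)
    (hr₀ : M + Real.sqrt (M ^ 2 - a ^ 2) < r₀) :
    let rp := M + Real.sqrt (M ^ 2 - a ^ 2)
    let rm := M - Real.sqrt (M ^ 2 - a ^ 2)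
    let W : ℝ → ℝ := fun r =>
      Real.exp (-2 * ∫ s in r₀..r, (c₁ * s ^ 2 - c₂) / (s ^ 2 - 2 * M * s + a ^ 2))
    let q := 2 * (c₂ - c₁ * rp ^ 2) / (rp - rm)
    1 ≤ q →
      ∃ l : ℝ,
        Filter.Tendsto (fun r => W r / (r ^ 2 - 2 * M * r + a ^ 2))
          (nhdsWithin rp (Set.Ioi rp)) (nhds l) ∧ (1 < q → l = 0) := by
  intro rp rm W q hq
  have hW : W = fun r =>
      Real.exp (-2 * ∫ s in r₀..r, (c₁ * s ^ 2 - c₂) / (s ^ 2 - 2 * M * s + a ^ 2)) := rfl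
  have hqdef : q = 2 * (c₂ - c₁ * rp ^ 2) / (rp - rm) := rfl
  set d := Real.sqrt (M ^ 2 - a ^ 2) with hd
  have hM : 0 < M := lt_of_le_of_lt ha haM
  have hd2 : d ^ 2 = M ^ 2 - a ^ 2 := Real.sq_sqrt (by nlinarith)
  have hdpos : 0 < d := Real.sqrt_pos.mpr (by nlinarith)
  have hrp : rp = M + d := rfl
  have hrm : rm = M - d := rfl
  have hrmrp : rm < rp := by rw [hrp, hrm]; linarith
  have hden : rp - rm ≠ 0 := by linarith
  have hr₀' : rp < r₀ := hr₀
  have hΔ : ∀ s : ℝ, s ^ 2 - 2 * M * s + a ^ 2 = (s - rp) * (s - rm) := by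
    intro s
    rw [hrp, hrm]
    linear_combination hd2
  -- partial fraction constants
  set A : ℝ := (c₁ * rp ^ 2 - c₂) / (rp - rm) with hA
  set B : ℝ := (c₂ - c₁ * rm ^ 2) / (rp - rm) with hB
  have hqA : q = -2 * A := by rw [hqdef, hA]; ring
  -- antiderivative
  set F : ℝ → ℝ := fun s => c₁ * s + A * Real.log (s - rp) + B * Real.log (s - rm) with hF
  have hderiv : ∀ s : ℝ, rp < s →
      HasDerivAt F ((c₁ * s ^ 2 - c₂) / (s ^ 2 - 2 * M * s + a ^ 2)) s := by
    intro s hs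
    have hx : s - rp ≠ 0 := by linarith
    have hy : s - rm ≠ 0 := by linarith
    have h1 : HasDerivAt (fun t : ℝ => t - rp) 1 s := (hasDerivAt_id s).sub_const rp
    have h2 : HasDerivAt (fun t : ℝ => t - rm) 1 s := (hasDerivAt_id s).sub_const rm
    have hl1 : HasDerivAt (fun t : ℝ => Real.log (t - rp)) ((s - rp)⁻¹) s := by
      simpa [Function.comp_def] using (Real.hasDerivAt_log hx).comp s h1
    have hl2 : HasDerivAt (fun t : ℝ => Real.log (t - rm)) ((s - rm)⁻¹) s := by
      simpa [Function.comp_def] using (Real.hasDerivAt_log hy).comp s h2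
    have hlin : HasDerivAt (fun t : ℝ => c₁ * t) c₁ s := by
      simpa using (hasDerivAt_id s).const_mul c₁
    have hsum : HasDerivAt F (c₁ + A * (s - rp)⁻¹ + B * (s - rm)⁻¹) s :=
      (hlin.add (hl1.const_mul A)).add (hl2.const_mul B)
    have heq : c₁ + A * (s - rp)⁻¹ + B * (s - rm)⁻¹
        = (c₁ * s ^ 2 - c₂) / (s ^ 2 - 2 * M * s + a ^ 2) := by
      rw [hΔ s, hA, hB]
      field_simp
      ring
    rwa [heq] at hsum
  -- evaluate the integral
  have hint : ∀ r : ℝ, rp < r →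
      (∫ s in r₀..r, (c₁ * s ^ 2 - c₂) / (s ^ 2 - 2 * M * s + a ^ 2)) = F r - F r₀ := by
    intro r hr
    have hsub : ∀ x ∈ Set.uIcc r₀ r, rp < x := by
      intro x hx
      rcases Set.mem_uIcc.mp hx with h | h
      · rcases h with ⟨h1, h2⟩; linarith
      · rcases h with ⟨h1, h2⟩; linarith
    apply intervalIntegral.integral_eq_sub_of_hasDerivAt
    · intro x hx; exact hderiv x (hsub x hx)
    · apply ContinuousOn.intervalIntegrable
      apply ContinuousOn.div
      · fun_prop
      · fun_prop
      · intro x hx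
        have hx' := hsub x hx
        rw [hΔ x]
        have : 0 < (x - rp) * (x - rm) := mul_pos (by linarith) (by linarith)
        exact ne_of_gt this
  -- the continuous factor
  set G : ℝ → ℝ := fun r =>
    Real.exp (2 * F r₀ - 2 * c₁ * r) * (r - rm) ^ (-2 * B - 1 : ℝ) with hG
  -- the pointwise identity on Ioi rp
  have key : ∀ r : ℝ, rp < r →
      W r / (r ^ 2 - 2 * M * r + a ^ 2) = (r - rp) ^ (q - 1 : ℝ) * G r := by
    intro r hr
    have hx : (0:ℝ) < r - rp := by linarith
    have hy : (0:ℝ) < r - rm := by linarith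
    have hWr : W r = Real.exp (-2 * (F r - F r₀)) := by rw [hW]; simp only; rw [hint r hr]
    have hsplit : -2 * (F r - F r₀) = (2 * F r₀ - 2 * c₁ * r)
        + Real.log (r - rp) * q + Real.log (r - rm) * (-2 * B) := by
      rw [hqA, hF]; ring
    rw [hWr, hΔ r, hsplit, Real.exp_add, Real.exp_add,
      ← Real.rpow_def_of_pos hx, ← Real.rpow_def_of_pos hy, hG]
    simp only
    rw [Real.rpow_sub hx, Real.rpow_sub hy, Real.rpow_one, Real.rpow_one]
    field_simp
  -- limits
  set l₀ : ℝ := if 1 < q then 0 else 1 with hl₀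
  have hGc : ContinuousAt G rp := by
    apply ContinuousAt.mul
    · exact (Real.continuous_exp.comp (by continuity)).continuousAt
    · exact (continuousAt_id.sub continuousAt_const).rpow_const
        (Or.inl (by simpa using hden))
  have hGt : Filter.Tendsto G (nhdsWithin rp (Set.Ioi rp)) (nhds (G rp)) :=
    hGc.continuousWithinAt
  have hpow : Filter.Tendsto (fun r => (r - rp) ^ (q - 1 : ℝ))
      (nhdsWithin rp (Set.Ioi rp)) (nhds l₀) := by
    by_cases h1 : 1 < q
    · have hpos : (0:ℝ) < q - 1 := by linarith
      have hc : ContinuousAt (fun x : ℝ => x ^ (q - 1 : ℝ)) 0 :=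
        continuousAt_id.rpow_const (Or.inr hpos.le)
      have hsub : Filter.Tendsto (fun r : ℝ => r - rp)
          (nhdsWithin rp (Set.Ioi rp)) (nhds 0) := by
        have h0 : Filter.Tendsto (fun r : ℝ => r - rp) (nhds rp) (nhds (rp - rp)) :=
          (continuous_id.sub continuous_const).tendsto rp
        rw [sub_self] at h0
        exact h0.mono_left nhdsWithin_le_nhds
      have := hc.tendsto.comp hsub
      simpa [Function.comp_def, hl₀, if_pos h1, Real.zero_rpow (ne_of_gt hpos)] using this
    · have hq1 : q = 1 := le_antisymm (not_lt.mp h1) hq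
      have : (fun r : ℝ => (r - rp) ^ (q - 1 : ℝ)) = fun _ => (1:ℝ) := by
        funext r; rw [hq1]; simp
      rw [this, hl₀, if_neg h1]
      exact tendsto_const_nhds
  refine ⟨l₀ * G rp, ?_, ?_⟩
  · have hev : (fun r => (r - rp) ^ (q - 1 : ℝ) * G r)
        =ᶠ[nhdsWithin rp (Set.Ioi rp)] fun r => W r / (r ^ 2 - 2 * M * r + a ^ 2) := by
      filter_upwards [self_mem_nhdsWithin] with r hr
      exact (key r hr).symm
    exact (hpow.mul hGt).congr' hev
  · intro h1; rw [hl₀, if_pos h1, zero_mul]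
end
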